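/- There exists $N_0$ such that for all natural numbers $n \ge N_0$ the following holds. Let $k = 1/\sqrt{n}$, let $b, \sigma, \epsilon$ be reals with $0 < b \le 1/(\log n)^2$, $0 \le \sigma \le 1/(\log n)^3$ and $|\epsilon| \le \sigma$. Define $G_0(w_0, w_1) = \frac{1-k}{1+\exp(-w_0 - w_1(b+\epsilon))} - \frac{k}{1+\exp(w_0)}$ and $G_1(w_0, w_1) = \frac{(1-k)\, b}{1+\exp(-w_0 - w_1(b+\epsilon))}$. Then for all $w_0, w_1 \in \mathbb{R}$ with $m := \max(|w_0|, |w_1|) \le (\log n)/4 - 4$, one has $G_1(w_0, w_1) < b$ and $G_0(w_0, w_1) > \exp(-2m)/8$. -/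

import Mathlib

set_option maxHeartbeats 1000000


/-- Paper's Lemma 1: for large enough `n`, with `k = 1/√n`,
`0 < b ≤ 1/(log n)^2`, `0 ≤ σ ≤ 1/(log n)^3`, `|ε| ≤ σ`, and class-averaged
gradients `G0, G1` of the logistic cross-entropy loss, for all weights with
`m := max |w0| |w1| ≤ (log n)/4 - 4` one has `G1 < b` and `G0 > exp (-2m)/8`. -/
theorem gradient_bounds :
    ∃ N0 : ℕ, ∀ n : ℕ, N0 ≤ n →
      ∀ b σ ε : ℝ, 0 < b → b ≤ 1 / (Real.log n) ^ 2 →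
        0 ≤ σ → σ ≤ 1 / (Real.log n) ^ 3 → |ε| ≤ σ →
        ∀ w0 w1 : ℝ, max |w0| |w1| ≤ Real.log n / 4 - 4 →
          (1 - 1 / Real.sqrt n) * b / (1 + Real.exp (-w0 - w1 * (b + ε))) < b ∧
          (1 - 1 / Real.sqrt n) / (1 + Real.exp (-w0 - w1 * (b + ε))) -
              (1 / Real.sqrt n) / (1 + Real.exp w0)
            > Real.exp (-(2 * max |w0| |w1|)) / 8 := by
  refine ⟨1, fun n hn b σ ε hb hbu hσ hσu hε w0 w1 hw => ?_⟩
  have hn1 : (1:ℝ) ≤ (n:ℝ) := by exact_mod_cast hn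
  have hn0 : (0:ℝ) < (n:ℝ) := by linarith
  set m := max |w0| |w1| with hm
  set L := Real.log n with hL
  have hm0 : (0:ℝ) ≤ m := le_trans (abs_nonneg w0) (le_max_left _ _)
  have hw0 : |w0| ≤ m := le_max_left _ _
  have hw1 : |w1| ≤ m := le_max_right _ _
  have hL16 : (16:ℝ) ≤ L := by linarith
  have hexpL : Real.exp L = n := Real.exp_log hn0
  -- sqrt n ≥ exp(2m+8)
  have hsqrt : Real.exp (2*m+8) ≤ Real.sqrt n := by
    rw [Real.le_sqrt' (Real.exp_pos _)]
    have : Real.exp (2*m+8) ^ 2 = Real.exp (4*m+16) := by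
      rw [sq, ← Real.exp_add]; ring_nf
    rw [this, ← hexpL]
    exact Real.exp_le_exp.2 (by linarith)
  have hsq0 : 0 < Real.sqrt n := lt_of_lt_of_le (Real.exp_pos _) hsqrt
  set k := 1 / Real.sqrt n with hk
  have hk0 : 0 < k := by positivity
  have hkle : k ≤ Real.exp (-(2*m)) * Real.exp (-8) := by
    rw [← Real.exp_add, show -(2*m) + -8 = -(2*m+8) by ring, Real.exp_neg]
    rw [hk, one_div, inv_le_inv₀ hsq0 (Real.exp_pos _)]
    exact hsqrt
  have he8 : Real.exp (-8 : ℝ) ≤ 1/9 := by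
    rw [Real.exp_neg]
    rw [show (1:ℝ)/9 = (9:ℝ)⁻¹ by norm_num, inv_le_inv₀ (Real.exp_pos _) (by norm_num)]
    nlinarith [Real.add_one_le_exp (8:ℝ)]
  have hk9 : k ≤ 1/9 := by
    have := Real.exp_le_exp.2 (show -(2*m) ≤ (0:ℝ) by linarith)
    rw [Real.exp_zero] at this
    nlinarith [Real.exp_pos (-(8:ℝ)), Real.exp_pos (-(2*m))]
  set E := Real.exp (-w0 - w1 * (b + ε)) with hE
  have hE0 : 0 < E := Real.exp_pos _
  -- exponent bound
  have hbs : b + σ ≤ 2 / L^2 := by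
    have hL1 : (1:ℝ) < L := by linarith
    have h3 : (1:ℝ)/L^3 ≤ 1/L^2 := by
      apply one_div_le_one_div_of_le (by positivity)
      nlinarith
    have : (1:ℝ)/L^2 + 1/L^2 = 2/L^2 := by ring
    linarith
  have hmb : m * (b + σ) ≤ 1/32 := by
    have h1 : m * (b + σ) ≤ (L/4) * (2/L^2) := by
      apply mul_le_mul (by linarith) hbs (by positivity) (by positivity)
    have h2 : (L/4) * (2/L^2) = 1/(2*L) := by
      field_simp; ring
    have h3 : 1/(2*L) ≤ (1:ℝ)/32 := by
      apply one_div_le_one_div_of_le (by norm_num) (by linarith)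
    linarith [h1, h2 ▸ h1]
  have hexpo : -w0 - w1 * (b + ε) ≤ m + 1/32 := by
    have h1 : -w0 ≤ m := (neg_le_abs w0).trans hw0
    have h2 : -(w1 * (b + ε)) ≤ |w1 * (b+ε)| := neg_le_abs _
    have h3 : |w1 * (b+ε)| = |w1| * |b+ε| := abs_mul _ _
    have h4 : |b+ε| ≤ b + σ := by
      calc |b+ε| ≤ |b| + |ε| := abs_add_le _ _
        _ ≤ b + σ := by rw [abs_of_pos hb]; linarith
    have h5 : |w1| * |b+ε| ≤ m * (b+σ) :=
      mul_le_mul hw1 h4 (abs_nonneg _) hm0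
    linarith
  have hEub : E ≤ Real.exp (m + 1/32) := Real.exp_le_exp.2 hexpo
  constructor
  · -- part 1
    have h1 : (1-k) * b / (1+E) ≤ (1-k) * b :=
      div_le_self (by nlinarith) (by linarith)
    nlinarith
  · -- part 2
    have hden : 1 + E ≤ 2 * Real.exp (m + 1/32) := by
      have : (1:ℝ) ≤ Real.exp (m + 1/32) := Real.one_le_exp (by positivity)
      linarith
    have h1 : (1-k) / (2 * Real.exp (m + 1/32)) ≤ (1-k) / (1+E) :=
      div_le_div_of_nonneg_left (by linarith) (by linarith) hden
    have h2 : (1-k) / (2 * Real.exp (m + 1/32))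
        = (1-k) * Real.exp (-(m + 1/32)) / 2 := by
      rw [Real.exp_neg]
      ring
    have h3 : Real.exp (-(2*m)) * Real.exp (-(1/32):ℝ) ≤ Real.exp (-(m+1/32)) := by
      rw [← Real.exp_add]
      exact Real.exp_le_exp.2 (by linarith)
    have he32 : (31:ℝ)/32 ≤ Real.exp (-(1/32):ℝ) := by
      have := Real.add_one_le_exp (-(1/32):ℝ)
      linarith
    have hsec : k / (1 + Real.exp w0) ≤ k := by
      apply div_le_self (le_of_lt hk0)
      linarith [Real.exp_pos w0]
    set A := Real.exp (-(2*m)) with hA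
    have hA0 : 0 < A := Real.exp_pos _
    have hA1 : A ≤ 1 := by
      rw [hA, ← Real.exp_zero]
      exact Real.exp_le_exp.2 (by linarith)
    -- chain
    have key : (1-k) * Real.exp (-(m+1/32)) / 2 - k > A / 8 := by
      set X := Real.exp (-(m+1/32)) with hX
      have hX0 : 0 < X := Real.exp_pos _
      have s1 : A * (31/32) ≤ X := by nlinarith
      have s2 : (8/9) * (A*(31/32)) ≤ (1-k) * X :=
        mul_le_mul (by linarith) s1 (by positivity) (by linarith)
      have s3 : k ≤ A * (1/9) := by nlinarith
      nlinarith
    calc (1-k) / (1+E) - k / (1 + Real.exp w0)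
        ≥ (1-k) * Real.exp (-(m+1/32)) / 2 - k := by
          rw [← h2]; linarith
      _ > A / 8 := key
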